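/- Let Γ : Δ_M → Δ_M map the probability simplex on M types to itself. A reproductive fitness exists (i.e., a vector field φ : Δ_M → ℝ₊^M with Σ_{j ∈ C(x)} x(j)φ_j(x) > 0 and Γ_i(x) = x(i)φ_i(x) / Σ_j x(j)φ_j(x) for all i ∈ C(x)) if and only if the no-mutations condition Σ_{j ∈ C(x)} Γ_j(x) = 1 holds for all x ∈ Δ_M. -/
import Mathlib


open Finset

/-- `φ` is a reproductive fitness for the update rule `Γ` on the simplex:
for every `x` in the simplex, `φ` is nonnegative, the average fitness
`∑ j, x j * φ x j` (which equals the sum over the support of `x`) is positive,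
and `Γ_i(x) = x i * φ_i(x) / ∑ j, x j * φ_j(x)` for every `i` in the support of `x`. -/
def IsRepFitness {M : ℕ} (Γ φ : (Fin M → ℝ) → (Fin M → ℝ)) : Prop :=
  ∀ x ∈ stdSimplex ℝ (Fin M),
    (∀ i, 0 ≤ φ x i) ∧ 0 < ∑ j, x j * φ x j ∧
      ∀ i, 0 < x i → Γ x i = x i * φ x i / ∑ j, x j * φ x j

/-- A reproductive fitness for `Γ` exists iff the no-mutations condition
`∑_{j ∈ C(x)} Γ_j(x) = 1` holds for all `x` in the simplex. -/
theorem repFitness_exists_iff_noMutations {M : ℕ}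
    (Γ : (Fin M → ℝ) → (Fin M → ℝ))
    (hΓ : ∀ x ∈ stdSimplex ℝ (Fin M), Γ x ∈ stdSimplex ℝ (Fin M)) :
    (∃ φ : (Fin M → ℝ) → (Fin M → ℝ), IsRepFitness Γ φ) ↔
      (∀ x ∈ stdSimplex ℝ (Fin M),
        ∑ j ∈ Finset.univ.filter (fun j => 0 < x j), Γ x j = 1) := by
  constructor
  · rintro ⟨φ, hφ⟩ x hx
    obtain ⟨hnn, hpos, heq⟩ := hφ x hx
    have hsum : ∑ j ∈ Finset.univ.filter (fun j => 0 < x j), Γ x j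
        = (∑ j ∈ Finset.univ.filter (fun j => 0 < x j), x j * φ x j)
          / ∑ j, x j * φ x j := by
      rw [Finset.sum_div]
      exact Finset.sum_congr rfl fun j hj => heq j (Finset.mem_filter.mp hj).2
    have hfull : ∑ j ∈ Finset.univ.filter (fun j => 0 < x j), x j * φ x j
        = ∑ j, x j * φ x j := by
      apply Finset.sum_filter_of_ne
      intro j _ hne
      by_contra h
      push_neg at h
      have : x j = 0 := le_antisymm h (hx.1 j)
      simp [this] at hne
    rw [hsum, hfull, div_self hpos.ne']
  · intro h
    refine ⟨fun x i => if 0 < x i then Γ x i / x i else 0, ?_⟩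
    intro x hx
    have hS : ∑ j, x j * (if 0 < x j then Γ x j / x j else 0) = 1 := by
      rw [← h x hx]
      rw [← Finset.sum_filter_of_ne (p := fun j => 0 < x j)]
      · apply Finset.sum_congr rfl
        intro j hj
        have hj' := (Finset.mem_filter.mp hj).2
        rw [if_pos hj', mul_div_cancel₀ _ hj'.ne']
      · intro j _ hne
        by_contra hc
        push_neg at hc
        have hxj : x j = 0 := le_antisymm hc (hx.1 j)
        simp [hxj] at hne
    refine ⟨?_, ?_, ?_⟩
    · intro i
      dsimp only
      split
      · exact div_nonneg ((hΓ x hx).1 i) (hx.1 i)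
      · exact le_refl 0
    · rw [hS]; exact one_pos
    · intro i hi
      dsimp only
      rw [hS, if_pos hi, div_one, mul_div_cancel₀ _ hi.ne']
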